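/- arXiv:2008.05688 — 8 statements merged into one kernel-verified Lean document; each statement's English description precedes it below -/
import Mathlib

section
/- Let A be a partially ordered set and n a natural number. If w' and w'' are two lists over A of the same length n that both arise by inserting copies of a fixed element a into the same base list w (i.e., both have w as the sublist obtained by deleting all occurrences of a), and w' ≤ w'' componentwise (w'_i ≤ w''_i in A for all i), then w' = w''. -/
/-- Erase all occurrences of the letter `a` from a word. -/
def aErase {α : Type*} [DecidableEq α] (a : α) (w : List α) : List α :=
  w.filter (· ≠ a)

/-- `w'` is an `a`-extension of `w`: it is obtained by inserting copies of `a` into `w`,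
equivalently erasing all occurrences of `a` from `w'` yields `w`. -/
def IsAExt {α : Type*} [DecidableEq α] (a : α) (w w' : List α) : Prop :=
  aErase a w' = w

/-- The induced relation `≤ₐ` on words, relative to a relation `r` on letters:
`v ≤ₐ w` iff there are `a`-extensions of `v` and `w` of equal length that are
related componentwise (componentwise relation of equal-length lists is `List.Forall₂ r`). -/
def LeExt {α : Type*} [DecidableEq α] (r : α → α → Prop) (a : α) (v w : List α) : Prop :=
  ∃ v' w', IsAExt a v v' ∧ IsAExt a w w' ∧ List.Forall₂ r v' w'

lemma auxA {α : Type*} [PartialOrder α] [DecidableEq α] (a : α) :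
    ∀ {u v : List α}, List.Forall₂ (· ≤ ·) u v → ∀ s : List α, s ≠ [] →
      (∀ b ∈ s, a < b) →
      u.filter (fun x => !decide (x = a)) = s ++ v.filter (fun x => !decide (x = a)) → False := by
  intro u v h
  induction h with
  | nil =>
    intro s hs _ hf
    simp only [List.filter_nil, List.append_nil] at hf
    exact hs hf.symm
  | @cons x y u v hxy h ih =>
    intro s hs hall hf
    by_cases hx : x = a <;> by_cases hy : y = a <;>
      simp only [List.filter_cons, hx, hy, decide_true, decide_false, Bool.not_true,
        Bool.not_false, if_true, if_false, Bool.false_eq_true, Bool.true_eq_false,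
        ite_true, ite_false] at hf
    · exact ih s hs hall hf
    · refine ih (s ++ [y]) (by simp) ?_ (by simpa using hf)
      intro b hb
      rcases List.mem_append.1 hb with hb | hb
      · exact hall b hb
      · simp only [List.mem_singleton] at hb
        subst hb
        exact lt_of_le_of_ne (hx ▸ hxy) (Ne.symm hy)
    · rcases s with _ | ⟨c, s'⟩
      · exact hs rfl
      · rw [List.cons_append, List.cons_eq_cons] at hf
        have hax : a < x := hf.1 ▸ hall c (List.mem_cons_self)
        exact absurd (hxy.trans_eq hy) hax.not_ge
    · rcases s with _ | ⟨c, s'⟩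
      · exact hs rfl
      · rw [List.cons_append, List.cons_eq_cons] at hf
        have hax : a < x := hf.1 ▸ hall c (List.mem_cons_self)
        refine ih (s' ++ [y]) (by simp) ?_ (by simpa using hf.2)
        intro b hb
        rcases List.mem_append.1 hb with hb | hb
        · exact hall b (List.mem_cons_of_mem _ hb)
        · simp only [List.mem_singleton] at hb
          subst hb
          exact hax.trans_le hxy

lemma auxB {α : Type*} [PartialOrder α] [DecidableEq α] (a : α) :
    ∀ {u v : List α}, List.Forall₂ (· ≤ ·) u v → ∀ s : List α, s ≠ [] →
      (∀ b ∈ s, b < a) →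
      v.filter (fun x => !decide (x = a)) = s ++ u.filter (fun x => !decide (x = a)) → False := by
  intro u v h
  induction h with
  | nil =>
    intro s hs _ hf
    simp only [List.filter_nil, List.append_nil] at hf
    exact hs hf.symm
  | @cons x y u v hxy h ih =>
    intro s hs hall hf
    by_cases hx : x = a <;> by_cases hy : y = a <;>
      simp only [List.filter_cons, hx, hy, decide_true, decide_false, Bool.not_true,
        Bool.not_false, if_true, if_false, Bool.false_eq_true, Bool.true_eq_false,
        ite_true, ite_false] at hf
    · exact ih s hs hall hf
    · rcases s with _ | ⟨c, s'⟩
      · exact hs rfl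
      · rw [List.cons_append, List.cons_eq_cons] at hf
        have hya : y < a := hf.1 ▸ hall c (List.mem_cons_self)
        exact absurd (show a ≤ y from hx ▸ hxy) hya.not_ge
    · refine ih (s ++ [x]) (by simp) ?_ (by simpa using hf)
      intro b hb
      rcases List.mem_append.1 hb with hb | hb
      · exact hall b hb
      · simp only [List.mem_singleton] at hb
        subst hb
        exact lt_of_le_of_ne (hy ▸ hxy) hx
    · rcases s with _ | ⟨c, s'⟩
      · exact hs rfl
      · rw [List.cons_append, List.cons_eq_cons] at hf
        have hya : y < a := hf.1 ▸ hall c (List.mem_cons_self)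
        refine ih (s' ++ [x]) (by simp) ?_ (by simpa using hf.2)
        intro b hb
        rcases List.mem_append.1 hb with hb | hb
        · exact hall b (List.mem_cons_of_mem _ hb)
        · simp only [List.mem_singleton] at hb
          subst hb
          exact hxy.trans_lt hya

/-- Two equal-length `a`-extensions of the same word that are componentwise comparable
are equal (Lemma 2.3). -/
theorem stmt_0 {α : Type*} [PartialOrder α] [DecidableEq α] (a : α)
    (w w' w'' : List α)
    (h' : IsAExt a w w') (h'' : IsAExt a w w'')
    (hle : List.Forall₂ (· ≤ ·) w' w'') :
    w' = w'' := by
  unfold IsAExt aErase at h' h''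
  have hf : w'.filter (fun x => !decide (x = a)) = w''.filter (fun x => !decide (x = a)) := by
    have := h'.trans h''.symm
    simpa [ne_eq, decide_not] using this
  clear h' h''
  induction hle with
  | nil => rfl
  | @cons x y u v hxy h ih =>
    by_cases hx : x = a <;> by_cases hy : y = a <;>
      simp only [List.filter_cons, hx, hy, decide_true, decide_false, Bool.not_true,
        Bool.not_false, if_true, if_false, Bool.false_eq_true, Bool.true_eq_false,
        ite_true, ite_false] at hf
    · rw [hx, hy, ih hf]
    · exact absurd hf (fun hf => auxA a h [y] (by simp)
        (by simpa using lt_of_le_of_ne (hx ▸ hxy) (Ne.symm hy)) (by simpa using hf))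
    · exact absurd hf (fun hf => auxB a h [x] (by simp)
        (by simpa using lt_of_le_of_ne (hy ▸ hxy) hx) (by simpa using hf.symm))
    · rw [List.cons_eq_cons] at hf
      rw [hf.1, ih hf.2]
end

section
/- Let A be a partial order, a ∈ A, and define ≤_a on lists over A_a = A \ {a} by: v ≤_a w iff there exist a-extensions v', w' of v, w of equal length with v' ≤ w' componentwise. Then ≤_a is antisymmetric: if v ≤_a w and w ≤_a v then v = w. -/
set_option linter.unusedSectionVars false
set_option linter.unusedVariables false

namespace Stmt3Aux


variable {α : Type*} [PartialOrder α] [DecidableEq α]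

theorem aErase_cons_self (a : α) (l : List α) : aErase a (a :: l) = aErase a l := by
  simp [aErase]

theorem aErase_cons_of_ne {x a : α} (h : x ≠ a) (l : List α) :
    aErase a (x :: l) = x :: aErase a l := by
  simp [aErase, h]

/-- A monotone partial matching witnessing `v ≤ₐ w`. -/
def IsMatch (a : α) (v w : List α) (M : ℕ → Option ℕ) : Prop :=
  (∀ i (hi : i < v.length), ∀ j, M i = some j → ∃ hj : j < w.length, v[i]'hi ≤ w[j]'hj) ∧
  (∀ i (hi : i < v.length), M i = none → v[i]'hi ≤ a) ∧
  (∀ j (hj : j < w.length), (∀ i, i < v.length → M i ≠ some j) → a ≤ w[j]'hj) ∧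
  (∀ i₁ i₂ j₁ j₂, i₁ < i₂ → i₂ < v.length → M i₁ = some j₁ → M i₂ = some j₂ → j₁ < j₂)

theorem build (a : α) {v' w' : List α} (h : List.Forall₂ (· ≤ ·) v' w') :
    ∃ M, IsMatch a (aErase a v') (aErase a w') M := by
  induction h with
  | nil =>
      refine ⟨fun _ => none, ?_, ?_, ?_, ?_⟩ <;> intro i hi <;> simp [aErase] at hi ⊢
  | @cons x y v' w' hxy ht ih =>
      obtain ⟨M, h1, h2, h3, h4⟩ := ih
      by_cases hx : x = a <;> by_cases hy : y = a
      · rw [hx] at hxy ⊢; rw [hy] at hxy ⊢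
        rw [aErase_cons_self, aErase_cons_self]
        exact ⟨M, h1, h2, h3, h4⟩
      · rw [hx] at hxy ⊢
        rw [aErase_cons_self, aErase_cons_of_ne hy]
        refine ⟨fun i => (M i).map (· + 1), ?_, ?_, ?_, ?_⟩
        · intro i hi j hij
          cases hMi : M i with
          | none => simp [hMi] at hij
          | some j₀ =>
              simp only [hMi, Option.map_some] at hij
              obtain rfl : j₀ + 1 = j := by injection hij
              obtain ⟨hj₀, hle⟩ := h1 i hi j₀ hMi
              exact ⟨by simpa using Nat.succ_lt_succ hj₀, by simpa using hle⟩
        · intro i hi hnone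
          cases hMi : M i with
          | none => exact h2 i hi hMi
          | some j₀ => simp [hMi] at hnone
        · intro j hj hyp
          cases j with
          | zero => simpa using hxy
          | succ j₀ =>
              have hj₀ : j₀ < (aErase a w').length := by simpa using hj
              have : ∀ i, i < (aErase a v').length → M i ≠ some j₀ := by
                intro i hi hMi
                exact hyp i hi (by simp [hMi])
              simpa using h3 j₀ hj₀ this
        · intro i₁ i₂ j₁ j₂ hlt hi₂ hm1 hm2
          cases hM1 : M i₁ with
          | none => simp [hM1] at hm1
          | some k₁ =>
              cases hM2 : M i₂ with
              | none => simp [hM2] at hm2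
              | some k₂ =>
                  simp only [hM1, hM2, Option.map_some] at hm1 hm2
                  obtain rfl : k₁ + 1 = j₁ := by injection hm1
                  obtain rfl : k₂ + 1 = j₂ := by injection hm2
                  exact Nat.succ_lt_succ (h4 i₁ i₂ k₁ k₂ hlt hi₂ hM1 hM2)
      · rw [hy] at hxy ⊢
        rw [aErase_cons_of_ne hx, aErase_cons_self]
        refine ⟨fun n => match n with | 0 => none | i + 1 => M i, ?_, ?_, ?_, ?_⟩
        · intro i hi j hij
          cases i with
          | zero => simp at hij
          | succ i₀ =>
              have hi₀ : i₀ < (aErase a v').length := by simpa using hi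
              obtain ⟨hj, hle⟩ := h1 i₀ hi₀ j hij
              exact ⟨hj, by simpa using hle⟩
        · intro i hi hnone
          cases i with
          | zero => simpa using hxy
          | succ i₀ =>
              have hi₀ : i₀ < (aErase a v').length := by simpa using hi
              simpa using h2 i₀ hi₀ hnone
        · intro j hj hyp
          refine h3 j hj ?_
          intro i hi hMi
          exact hyp (i + 1) (by simpa using Nat.succ_lt_succ hi) hMi
        · intro i₁ i₂ j₁ j₂ hlt hi₂ hm1 hm2
          cases i₁ with
          | zero => simp at hm1
          | succ k₁ =>
              cases i₂ with
              | zero => omega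
              | succ k₂ =>
                  have hk₂ : k₂ < (aErase a v').length := by simpa using hi₂
                  exact h4 k₁ k₂ j₁ j₂ (by omega) hk₂ hm1 hm2
      · rw [aErase_cons_of_ne hx, aErase_cons_of_ne hy]
        refine ⟨fun n => match n with | 0 => some 0 | i + 1 => (M i).map (· + 1),
          ?_, ?_, ?_, ?_⟩
        · intro i hi j hij
          cases i with
          | zero =>
              obtain rfl : (0 : ℕ) = j := by injection hij
              exact ⟨by simp, by simpa using hxy⟩
          | succ i₀ =>
              have hi₀ : i₀ < (aErase a v').length := by simpa using hi
              cases hMi : M i₀ with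
              | none => simp [hMi] at hij
              | some j₀ =>
                  simp only [hMi, Option.map_some] at hij
                  obtain rfl : j₀ + 1 = j := by injection hij
                  obtain ⟨hj₀, hle⟩ := h1 i₀ hi₀ j₀ hMi
                  exact ⟨by simpa using Nat.succ_lt_succ hj₀, by simpa using hle⟩
        · intro i hi hnone
          cases i with
          | zero => simp at hnone
          | succ i₀ =>
              have hi₀ : i₀ < (aErase a v').length := by simpa using hi
              cases hMi : M i₀ with
              | none => simpa using h2 i₀ hi₀ hMi
              | some j₀ => simp [hMi] at hnone
        · intro j hj hyp
          cases j with
          | zero => exact absurd rfl (hyp 0 (by simp))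
          | succ j₀ =>
              have hj₀ : j₀ < (aErase a w').length := by simpa using hj
              have : ∀ i, i < (aErase a v').length → M i ≠ some j₀ := by
                intro i hi hMi
                exact hyp (i + 1) (by simpa using Nat.succ_lt_succ hi) (by simp [hMi])
              simpa using h3 j₀ hj₀ this
        · intro i₁ i₂ j₁ j₂ hlt hi₂ hm1 hm2
          cases i₁ with
          | zero =>
              obtain rfl : (0 : ℕ) = j₁ := by injection hm1
              cases i₂ with
              | zero => omega
              | succ k₂ =>
                  cases hM2 : M k₂ with
                  | none => simp [hM2] at hm2
                  | some m₂ =>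
                      simp only [hM2, Option.map_some] at hm2
                      obtain rfl : m₂ + 1 = j₂ := by injection hm2
                      omega
          | succ k₁ =>
              cases i₂ with
              | zero => omega
              | succ k₂ =>
                  have hk₂ : k₂ < (aErase a v').length := by simpa using hi₂
                  cases hM1 : M k₁ with
                  | none => simp [hM1] at hm1
                  | some m₁ =>
                      cases hM2 : M k₂ with
                      | none => simp [hM2] at hm2
                      | some m₂ =>
                          simp only [hM1, hM2, Option.map_some] at hm1 hm2
                          obtain rfl : m₁ + 1 = j₁ := by injection hm1
                          obtain rfl : m₂ + 1 = j₂ := by injection hm2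
                          exact Nat.succ_lt_succ (h4 k₁ k₂ m₁ m₂ (by omega) hk₂ hM1 hM2)



/-- Key combinatorial lemma: a partial self-injection of the index set of `v`
whose steps increase values, whose undefined points have value `≤ a`, and whose
non-hit points have value `≥ a`, must be surjective (otherwise chasing the orbit
starting at a non-hit point exhibits the letter `a` inside `v`). -/
theorem surj_of_partial (a : α) (v : List α) (ha : a ∉ v) (σ : ℕ → Option ℕ)
    (hdom : ∀ i, i < v.length → ∀ j, σ i = some j → j < v.length)
    (hinj : ∀ i₁ i₂ j, i₁ < v.length → i₂ < v.length → σ i₁ = some j → σ i₂ = some j → i₁ = i₂)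
    (hstep : ∀ i (hi : i < v.length), ∀ j, σ i = some j → ∃ hj : j < v.length, v[i]'hi ≤ v[j]'hj)
    (hnone : ∀ i (hi : i < v.length), σ i = none → v[i]'hi ≤ a)
    (hnr : ∀ j (hj : j < v.length), (∀ i, i < v.length → σ i ≠ some j) → a ≤ v[j]'hj) :
    ∀ j, j < v.length → ∃ i, i < v.length ∧ σ i = some j := by
  intro j₀ hj₀
  by_contra hc
  push_neg at hc
  have hc' : ∀ i, i < v.length → σ i ≠ some j₀ := fun i hi h => (hc i hi) h
  have haj : a ≤ v[j₀]'hj₀ := hnr j₀ hj₀ hc'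
  -- the orbit path starting at j₀
  let path : ℕ → Option ℕ := fun n => (fun o => Option.bind o σ)^[n] (some j₀)
  have path_zero : path 0 = some j₀ := rfl
  have path_succ : ∀ n, path (n + 1) = (path n).bind σ := by
    intro n
    simp only [path, Function.iterate_succ_apply']
  have P0 : ∀ n i, path n = some i → i < v.length := by
    intro n
    induction n with
    | zero => intro i h; rw [path_zero] at h; injection h with h; omega
    | succ n ih =>
        intro i h
        rw [path_succ] at h
        cases hp : path n with
        | none => rw [hp] at h; simp at h
        | some i' =>
            rw [hp] at h; simp only [Option.bind_some] at h
            exact hdom i' (ih i' hp) i h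
  have P1 : ∀ n i, path n = some i → ∃ h : i < v.length, v[j₀]'hj₀ ≤ v[i]'h := by
    intro n
    induction n with
    | zero =>
        intro i h
        rw [path_zero] at h
        injection h with h
        subst h
        exact ⟨hj₀, le_refl _⟩
    | succ n ih =>
        intro i h
        rw [path_succ] at h
        cases hp : path n with
        | none => rw [hp] at h; simp at h
        | some i' =>
            rw [hp] at h; simp only [Option.bind_some] at h
            obtain ⟨hi', hle'⟩ := ih i' hp
            obtain ⟨hi, hle⟩ := hstep i' hi' i h
            exact ⟨hi, le_trans hle' hle⟩
  have P3 : ∀ s d i, path s = some i → path (s + d) = some i → d = 0 := by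
    intro s
    induction s with
    | zero =>
        intro d i h0 hd
        rw [path_zero] at h0
        injection h0 with h0
        subst h0
        cases d with
        | zero => rfl
        | succ d' =>
            exfalso
            rw [show 0 + (d' + 1) = d' + 1 by omega, path_succ] at hd
            cases hp : path d' with
            | none => rw [hp] at hd; simp at hd
            | some i' =>
                rw [hp] at hd; simp only [Option.bind_some] at hd
                exact hc' i' (P0 d' i' hp) hd
    | succ s ih =>
        intro d i h0 hd
        rw [path_succ] at h0
        rw [show s + 1 + d = (s + d) + 1 by omega, path_succ] at hd
        cases hp1 : path s with
        | none => rw [hp1] at h0; simp at h0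
        | some i₁ =>
            rw [hp1] at h0; simp only [Option.bind_some] at h0
            cases hp2 : path (s + d) with
            | none => rw [hp2] at hd; simp at hd
            | some i₂ =>
                rw [hp2] at hd; simp only [Option.bind_some] at hd
                have : i₁ = i₂ :=
                  hinj i₁ i₂ i (P0 s i₁ hp1) (P0 (s + d) i₂ hp2) h0 hd
                subst this
                exact ih d i₁ hp1 (by rw [hp2])
  by_cases hall : ∀ n, n ≤ v.length → (path n).isSome
  · -- pigeonhole : too many distinct values
    have hgetlt : ∀ n : Fin (v.length + 1), ((path n.val).getD 0) < v.length := by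
      intro n
      have hs := hall n.val (by omega)
      cases hp : path n.val with
      | none => rw [hp] at hs; simp at hs
      | some i => simpa [hp] using P0 n.val i hp
    obtain ⟨n, m, hnm, heq⟩ :=
      Fintype.exists_ne_map_eq_of_card_lt
        (fun n : Fin (v.length + 1) => (⟨(path n.val).getD 0, hgetlt n⟩ : Fin v.length))
        (by simp)
    have key : ∀ (n m : Fin (v.length + 1)), n.val < m.val →
        (path n.val).getD 0 = (path m.val).getD 0 → False := by
      intro n m hlt hval
      have hsn := hall n.val (by omega)
      have hsm := hall m.val (by omega)
      cases hpn : path n.val with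
      | none => rw [hpn] at hsn; simp at hsn
      | some i =>
          cases hpm : path m.val with
          | none => rw [hpm] at hsm; simp at hsm
          | some i' =>
              rw [hpn, hpm] at hval
              simp only [Option.getD_some] at hval
              subst hval
              have := P3 n.val (m.val - n.val) i hpn
                (by rw [show n.val + (m.val - n.val) = m.val by omega]; exact hpm)
              omega
    have hval : (⟨(path n.val).getD 0, hgetlt n⟩ : Fin v.length) =
        ⟨(path m.val).getD 0, hgetlt m⟩ := heq
    have hval' : (path n.val).getD 0 = (path m.val).getD 0 := by
      exact congrArg Fin.val hval
    rcases Nat.lt_or_ge n.val m.val with h | h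
    · exact key n m h hval'
    · have : m.val < n.val := by
        rcases Nat.eq_or_lt_of_le h with h' | h'
        · exact absurd (Fin.ext h'.symm) hnm
        · exact h'
      exact key m n this hval'.symm
  · -- the path dies: its last element has value sandwiched at `a`
    push_neg at hall
    obtain ⟨n, hn, hnsome⟩ := hall
    have hex : ∃ n, path n = none := ⟨n, by
      cases hp : path n with
      | none => rfl
      | some i => rw [hp] at hnsome; simp at hnsome⟩
    classical
    let N := Nat.find hex
    have hN : path N = none := Nat.find_spec hex
    have hN0 : N ≠ 0 := by
      intro h
      rw [h, path_zero] at hN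
      simp at hN
    have hprev : path (N - 1) ≠ none := Nat.find_min hex (by omega)
    cases hp : path (N - 1) with
    | none => exact hprev hp
    | some i =>
        have hstepN : path N = (path (N - 1)).bind σ := by
          have := path_succ (N - 1)
          rwa [show N - 1 + 1 = N by omega] at this
        rw [hN, hp] at hstepN
        simp only [Option.bind_some] at hstepN
        have hi : i < v.length := P0 (N - 1) i hp
        have h₁ : v[i]'hi ≤ a := hnone i hi hstepN.symm
        obtain ⟨hi', h₂⟩ := P1 (N - 1) i hp
        have : v[i]'hi = a := le_antisymm h₁ (le_trans haj h₂)
        exact ha (this ▸ List.getElem_mem hi)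


theorem total_of_surj (len : ℕ) (σ : ℕ → Option ℕ)
    (hinj : ∀ i₁ i₂ j, i₁ < len → i₂ < len → σ i₁ = some j → σ i₂ = some j → i₁ = i₂)
    (hsurj : ∀ j, j < len → ∃ i, i < len ∧ σ i = some j) :
    ∀ i, i < len → ∃ j, j < len ∧ σ i = some j := by
  classical
  let g : Fin len → Fin len := fun j => ⟨(hsurj j.val j.isLt).choose,
    (hsurj j.val j.isLt).choose_spec.1⟩
  have hg : ∀ j : Fin len, σ (g j).val = some j.val :=
    fun j => (hsurj j.val j.isLt).choose_spec.2
  have hginj : Function.Injective g := by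
    intro j₁ j₂ h
    have h1 := hg j₁
    have h2 := hg j₂
    rw [h] at h1
    rw [h2] at h1
    exact Fin.ext (by injection h1 with h1; omega)
  have hgsurj : Function.Surjective g := Finite.injective_iff_surjective.mp hginj
  intro i hi
  obtain ⟨j, hj⟩ := hgsurj ⟨i, hi⟩
  refine ⟨j.val, j.isLt, ?_⟩
  have := hg j
  rwa [hj] at this

theorem inj_of_mono (len : ℕ) (M : ℕ → Option ℕ)
    (h4 : ∀ i₁ i₂ j₁ j₂, i₁ < i₂ → i₂ < len → M i₁ = some j₁ → M i₂ = some j₂ → j₁ < j₂) :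
    ∀ i₁ i₂ j, i₁ < len → i₂ < len → M i₁ = some j → M i₂ = some j → i₁ = i₂ := by
  intro i₁ i₂ j hi₁ hi₂ hm₁ hm₂
  rcases Nat.lt_trichotomy i₁ i₂ with h | h | h
  · have := h4 i₁ i₂ j j h hi₂ hm₁ hm₂; omega
  · exact h
  · have := h4 i₂ i₁ j j h hi₁ hm₂ hm₁; omega

theorem nat_le_of_mono (k : ℕ) (f : ℕ → ℕ)
    (hmono : ∀ i j, i < j → j < k → f i < f j) : ∀ i, i < k → i ≤ f i := by
  intro i
  induction i with
  | zero => omega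
  | succ n ih =>
      intro h
      have h1 := hmono n (n + 1) (by omega) h
      have h2 := ih (by omega)
      omega

theorem nat_eq_of_mono (k : ℕ) (f : ℕ → ℕ) (hlt : ∀ i, i < k → f i < k)
    (hmono : ∀ i j, i < j → j < k → f i < f j) : ∀ i, i < k → f i = i := by
  have hle := nat_le_of_mono k f hmono
  have hge : ∀ d i, i < k → k ≤ i + d + 1 → f i ≤ i := by
    intro d
    induction d with
    | zero => intro i hi hki; have := hlt i hi; omega
    | succ d ih =>
        intro i hi hki
        by_cases h : k ≤ i + d + 1
        · exact ih i hi h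
        · have h1 : i + 1 < k := by omega
          have h2 := hmono i (i + 1) (by omega) h1
          have h3 := ih (i + 1) h1 (by omega)
          omega
  intro i hi
  have := hle i hi
  have := hge (k - i - 1) i hi (by omega)
  omega

theorem getElem_idx_congr {α : Type*} {l : List α} {i j : ℕ} (h : i = j) (hi : i < l.length) :
    l[i]'hi = l[j]'(h ▸ hi) := by subst h; rfl

theorem exists_match {a : α} {v w : List α} (h : LeExt (· ≤ ·) a v w) :
    ∃ M, IsMatch a v w M := by
  obtain ⟨v', w', hv', hw', hf⟩ := h
  obtain ⟨M, hM⟩ := build a hf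
  rw [IsAExt] at hv' hw'
  rw [← hv', ← hw']
  exact ⟨M, hM⟩

/-- Compose two matchings into a partial self-injection and verify the
hypotheses of `surj_of_partial`. -/
theorem main_aux {a : α} {v w : List α} (hv : a ∉ v) (hw : a ∉ w)
    {M M' : ℕ → Option ℕ} (hM : IsMatch a v w M) (hM' : IsMatch a w v M') :
    (∀ i, i < v.length → ∃ p, p < w.length ∧ M i = some p) := by
  obtain ⟨h1, h2, h3, h4⟩ := hM
  obtain ⟨g1, g2, g3, g4⟩ := hM'
  set σ : ℕ → Option ℕ := fun i => (M i).bind M' with hσ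
  have hMinj := inj_of_mono v.length M h4
  have hM'inj := inj_of_mono w.length M' g4
  -- basic analysis of σ
  have hσsome : ∀ i j, σ i = some j → ∃ p, M i = some p ∧ M' p = some j := by
    intro i j hij
    cases hMi : M i with
    | none => rw [hσ] at hij; simp only [hMi, Option.bind_none] at hij; exact absurd hij (by simp)
    | some p =>
        rw [hσ] at hij; simp only [hMi, Option.bind_some] at hij
        exact ⟨p, rfl, hij⟩
  have hdom : ∀ i, i < v.length → ∀ j, σ i = some j → j < v.length := by
    intro i hi j hij
    obtain ⟨p, hp1, hp2⟩ := hσsome i j hij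
    obtain ⟨hpw, _⟩ := h1 i hi p hp1
    obtain ⟨hjv, _⟩ := g1 p hpw j hp2
    exact hjv
  have hinj : ∀ i₁ i₂ j, i₁ < v.length → i₂ < v.length →
      σ i₁ = some j → σ i₂ = some j → i₁ = i₂ := by
    intro i₁ i₂ j hi₁ hi₂ hj₁ hj₂
    obtain ⟨p₁, hp₁, hq₁⟩ := hσsome i₁ j hj₁
    obtain ⟨p₂, hp₂, hq₂⟩ := hσsome i₂ j hj₂
    obtain ⟨hpw₁, _⟩ := h1 i₁ hi₁ p₁ hp₁
    obtain ⟨hpw₂, _⟩ := h1 i₂ hi₂ p₂ hp₂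
    have : p₁ = p₂ := hM'inj p₁ p₂ j hpw₁ hpw₂ hq₁ hq₂
    subst this
    exact hMinj i₁ i₂ p₁ hi₁ hi₂ hp₁ hp₂
  have hstep : ∀ i (hi : i < v.length), ∀ j, σ i = some j →
      ∃ hj : j < v.length, v[i]'hi ≤ v[j]'hj := by
    intro i hi j hij
    obtain ⟨p, hp1, hp2⟩ := hσsome i j hij
    obtain ⟨hpw, hle1⟩ := h1 i hi p hp1
    obtain ⟨hjv, hle2⟩ := g1 p hpw j hp2
    exact ⟨hjv, le_trans hle1 hle2⟩
  have hnone : ∀ i (hi : i < v.length), σ i = none → v[i]'hi ≤ a := by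
    intro i hi hn
    cases hMi : M i with
    | none => exact h2 i hi hMi
    | some p =>
        rw [hσ] at hn
        simp only [hMi, Option.bind_some] at hn
        obtain ⟨hpw, hle1⟩ := h1 i hi p hMi
        exact le_trans hle1 (g2 p hpw hn)
  have hnr : ∀ j (hj : j < v.length), (∀ i, i < v.length → σ i ≠ some j) → a ≤ v[j]'hj := by
    intro j hj hyp
    by_cases hex : ∃ p, p < w.length ∧ M' p = some j
    · obtain ⟨p, hpw, hMp⟩ := hex
      have hnp : ∀ i, i < v.length → M i ≠ some p := by
        intro i hi hMi
        refine hyp i hi ?_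
        rw [hσ]
        simp only [hMi, Option.bind_some]
        exact hMp
      have h₁ : a ≤ w[p]'hpw := h3 p hpw hnp
      obtain ⟨_, h₂⟩ := g1 p hpw j hMp
      exact le_trans h₁ h₂
    · push_neg at hex
      exact g3 j hj fun p hp => hex p hp
  have hsurj := surj_of_partial a v hv σ hdom hinj hstep hnone hnr
  have htot := total_of_surj v.length σ hinj hsurj
  intro i hi
  obtain ⟨j, hjv, hij⟩ := htot i hi
  obtain ⟨p, hp1, _⟩ := hσsome i j hij
  obtain ⟨hpw, _⟩ := h1 i hi p hp1
  exact ⟨p, hpw, hp1⟩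

theorem stmt_3_aux (a : α)
    (v w : List α) (hv : a ∉ v) (hw : a ∉ w)
    (hvw : LeExt (· ≤ ·) a v w) (hwv : LeExt (· ≤ ·) a w v) :
    v = w := by
  obtain ⟨M, hM⟩ := exists_match hvw
  obtain ⟨M', hM'⟩ := exists_match hwv
  have hMtot := main_aux hv hw hM hM'
  have hM'tot := main_aux hw hv hM' hM
  obtain ⟨h1, h2, h3, h4⟩ := hM
  obtain ⟨g1, g2, g3, g4⟩ := hM'
  set k := v.length with hk
  set l := w.length with hl
  set Mt : ℕ → ℕ := fun i => (M i).getD 0 with hMt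
  set M't : ℕ → ℕ := fun p => (M' p).getD 0 with hM't
  have hMts : ∀ i, i < k → M i = some (Mt i) ∧ Mt i < l := by
    intro i hi
    obtain ⟨p, hp, hMp⟩ := hMtot i hi
    have hpe : Mt i = p := by rw [hMt]; simp [hMp]
    rw [hpe]
    exact ⟨hMp, hp⟩
  have hM'ts : ∀ p, p < l → M' p = some (M't p) ∧ M't p < k := by
    intro p hp
    obtain ⟨i, hi, hMp⟩ := hM'tot p hp
    have hpe : M't p = i := by rw [hM't]; simp [hMp]
    rw [hpe]
    exact ⟨hMp, hi⟩
  have hMtmono : ∀ i j, i < j → j < k → Mt i < Mt j := by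
    intro i j hij hj
    exact h4 i j (Mt i) (Mt j) hij hj (hMts i (by omega)).1 (hMts j hj).1
  have hM'tmono : ∀ p q, p < q → q < l → M't p < M't q := by
    intro p q hpq hq
    exact g4 p q (M't p) (M't q) hpq hq (hM'ts p (by omega)).1 (hM'ts q hq).1
  -- lengths are equal
  have hkl : k = l := by
    have hk_le : k ≤ l := by
      rcases Nat.eq_zero_or_pos k with h0 | h0
      · omega
      · have h1' := nat_le_of_mono k Mt hMtmono (k - 1) (by omega)
        have h2' := (hMts (k - 1) (by omega)).2
        omega
    have hl_le : l ≤ k := by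
      rcases Nat.eq_zero_or_pos l with h0 | h0
      · omega
      · have h1' := nat_le_of_mono l M't hM'tmono (l - 1) (by omega)
        have h2' := (hM'ts (l - 1) (by omega)).2
        omega
    omega
  -- the composite is the identity
  have hσt : ∀ i, i < k → M't (Mt i) = i := by
    refine nat_eq_of_mono k (fun i => M't (Mt i)) ?_ ?_
    · intro i hi
      exact (hM'ts (Mt i) (hMts i hi).2).2
    · intro i j hij hj
      exact hM'tmono (Mt i) (Mt j) (hMtmono i j hij hj) (hMts j hj).2
  -- hence Mt is the identity
  have hMtid : ∀ i, i < k → Mt i = i := by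
    intro i hi
    have h1' := nat_le_of_mono k Mt hMtmono i hi
    have h2' := nat_le_of_mono l M't hM'tmono (Mt i) (hMts i hi).2
    have h3' := hσt i hi
    omega
  refine List.ext_getElem (by omega) ?_
  intro n h₁ h₂
  have hMn := (hMts n h₁).1
  have hMtn : Mt n = n := hMtid n h₁
  have hM'n := (hM'ts (Mt n) (hMts n h₁).2).1
  obtain ⟨hw1, hle1⟩ := h1 n h₁ (Mt n) hMn
  obtain ⟨hv1, hle2⟩ := g1 (Mt n) hw1 (M't (Mt n)) hM'n
  have hσn : M't (Mt n) = n := hσt n h₁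
  have e1 : v[n]'h₁ = w[Mt n]'hw1 := by
    refine le_antisymm hle1 ?_
    have he : v[M't (Mt n)]'hv1 = v[n]'h₁ := getElem_idx_congr hσn hv1
    rw [he] at hle2
    exact hle2
  rw [e1]
  exact getElem_idx_congr hMtn hw1

end Stmt3Aux

/-- The induced relation `≤ₐ` is antisymmetric (Theorem 2.2). -/
theorem stmt_3 {α : Type*} [PartialOrder α] [DecidableEq α] (a : α)
    (v w : List α) (hv : a ∉ v) (hw : a ∉ w)
    (hvw : LeExt (· ≤ ·) a v w) (hwv : LeExt (· ≤ ·) a w v) :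
    v = w :=
  Stmt3Aux.stmt_3_aux a v w hv hw hvw hwv
end

section
/- Let A be a partial order, a ∈ A, and define ≤_a on lists over A_a = A \ {a} as: v ≤_a w iff there exist a-extensions v', w' of equal length with v' ≤ w' componentwise. Then ≤_a is transitive. -/
lemma aErase_cons_self {α : Type*} [DecidableEq α] (a : α) (t : List α) :
    aErase a (a :: t) = aErase a t := by simp [aErase]

lemma aErase_cons_ne {α : Type*} [DecidableEq α] {a x : α} (h : x ≠ a) (t : List α) :
    aErase a (x :: t) = x :: aErase a t := by simp [aErase, h]

lemma aErase_cons {α : Type*} [DecidableEq α] (a p : α) (U ps : List α)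
    (hU : aErase a U = aErase a ps) : aErase a (p :: U) = aErase a (p :: ps) := by
  by_cases hp : p = a
  · subst hp; rw [aErase_cons_self, aErase_cons_self]; exact hU
  · rw [aErase_cons_ne hp, aErase_cons_ne hp, hU]

/-- Common-refinement lemma: if `v'` and `v''` have the same `a`-erasure,
`u' ≤ v'` and `v'' ≤ w''` componentwise, then there are `U`, `W` with the same
`a`-erasures as `u'`, `w''` respectively, related componentwise. -/
theorem key_merge {α : Type*} [PartialOrder α] [DecidableEq α] (a : α) :
    ∀ n (v' v'' u' w'' : List α), v'.length + v''.length = n →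
    aErase a v' = aErase a v'' →
    List.Forall₂ (· ≤ ·) u' v' → List.Forall₂ (· ≤ ·) v'' w'' →
    ∃ U W, aErase a U = aErase a u' ∧ aErase a W = aErase a w'' ∧
      List.Forall₂ (· ≤ ·) U W := by
  intro n
  induction n using Nat.strong_induction_on with
  | _ n ih =>
    intro v' v'' u' w'' hn he h1 h2
    match v', v'', h1, h2 with
    | [], [], List.Forall₂.nil, List.Forall₂.nil =>
      exact ⟨[], [], rfl, rfl, List.Forall₂.nil⟩
    | [], y :: ys, List.Forall₂.nil, List.Forall₂.cons (b := q) (l₂ := qs) hyq h2' =>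
      have hy : y = a := by
        by_contra hya
        rw [aErase_cons_ne hya] at he
        exact absurd he.symm (List.cons_ne_nil _ _)
      rw [hy] at hyq he
      rw [aErase_cons_self] at he
      simp only [List.length_nil, List.length_cons] at hn
      obtain ⟨U, W, hU, hW, hUW⟩ :=
        ih ([].length + ys.length) (by simp; omega) [] ys [] qs rfl he
          List.Forall₂.nil h2'
      refine ⟨a :: U, q :: W, ?_, aErase_cons a q W qs hW, List.Forall₂.cons hyq hUW⟩
      rw [aErase_cons_self]; exact hU
    | x :: xs, [], List.Forall₂.cons (a := p) (l₁ := ps) hpx h1', List.Forall₂.nil =>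
      have hx : x = a := by
        by_contra hxa
        rw [aErase_cons_ne hxa] at he
        exact absurd he (List.cons_ne_nil _ _)
      rw [hx] at hpx he
      rw [aErase_cons_self] at he
      simp only [List.length_nil, List.length_cons] at hn
      obtain ⟨U, W, hU, hW, hUW⟩ :=
        ih (xs.length + [].length) (by simp; omega) xs [] ps [] rfl he h1'
          List.Forall₂.nil
      refine ⟨p :: U, a :: W, aErase_cons a p U ps hU, ?_, List.Forall₂.cons hpx hUW⟩
      rw [aErase_cons_self]; exact hW
    | x :: xs, y :: ys, List.Forall₂.cons (a := p) (l₁ := ps) hpx h1',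
        List.Forall₂.cons (b := q) (l₂ := qs) hyq h2' =>
      simp only [List.length_cons] at hn
      by_cases hx : x = a
      · rw [hx] at hpx he
        rw [aErase_cons_self] at he
        obtain ⟨U, W, hU, hW, hUW⟩ :=
          ih (xs.length + (y :: ys).length)
            (by simp only [List.length_cons]; omega) xs (y :: ys) ps (q :: qs)
            rfl he h1' (List.Forall₂.cons hyq h2')
        refine ⟨p :: U, a :: W, aErase_cons a p U ps hU, ?_,
          List.Forall₂.cons hpx hUW⟩
        rw [aErase_cons_self]; exact hW
      · by_cases hy : y = a
        · rw [hy] at hyq he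
          rw [aErase_cons_self] at he
          obtain ⟨U, W, hU, hW, hUW⟩ :=
            ih ((x :: xs).length + ys.length)
              (by simp only [List.length_cons]; omega) (x :: xs) ys (p :: ps) qs
              rfl he (List.Forall₂.cons hpx h1') h2'
          refine ⟨a :: U, q :: W, ?_, aErase_cons a q W qs hW,
            List.Forall₂.cons hyq hUW⟩
          rw [aErase_cons_self]; exact hU
        · rw [aErase_cons_ne hx, aErase_cons_ne hy] at he
          obtain ⟨hxy, he'⟩ := List.cons_eq_cons.mp he
          obtain ⟨U, W, hU, hW, hUW⟩ :=
            ih (xs.length + ys.length) (by omega) xs ys ps qs rfl he' h1' h2'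
          exact ⟨p :: U, q :: W, aErase_cons a p U ps hU, aErase_cons a q W qs hW,
            List.Forall₂.cons (le_trans hpx (hxy ▸ hyq)) hUW⟩

/-- The induced relation `≤ₐ` is transitive. -/
theorem stmt_4 {α : Type*} [PartialOrder α] [DecidableEq α] (a : α)
    (u v w : List α) (hu : a ∉ u) (hv : a ∉ v) (hw : a ∉ w)
    (huv : LeExt (· ≤ ·) a u v) (hvw : LeExt (· ≤ ·) a v w) :
    LeExt (· ≤ ·) a u w := by
  obtain ⟨u', v1, hu', hv1, h1⟩ := huv
  obtain ⟨v2, w', hv2, hw', h2⟩ := hvw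
  obtain ⟨U, W, hU, hW, hUW⟩ := key_merge a (v1.length + v2.length) v1 v2 u' w' rfl
    (hv1.trans hv2.symm) h1 h2
  exact ⟨U, W, hU.trans hu', hW.trans hw', hUW⟩
end

section
/- Let A be a partial order, a ∈ A. Any two a-extensions w', w'' of the same word w ∈ (A\{a})* that have the same length are either equal or incomparable in the componentwise order on A^n. -/
private lemma forall₂_eraseIdx {α β : Type*} {r : α → β → Prop} :
    ∀ {v : List α} {w : List β}, List.Forall₂ r v w → ∀ i,
      List.Forall₂ r (v.eraseIdx i) (w.eraseIdx i) := by
  intro v w h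
  induction h with
  | nil => intro i; simp [List.eraseIdx]
  | cons hd tl ih =>
    intro i
    cases i with
    | zero => simpa using tl
    | succ j => exact List.Forall₂.cons hd (ih j)

private lemma perm_cons_eraseIdx {α : Type*} :
    ∀ (l : List α) (i : ℕ) (h : i < l.length), l.Perm (l[i] :: l.eraseIdx i) := by
  intro l
  induction l with
  | nil => intro i h; simp at h
  | cons x t ih =>
    intro i h
    cases i with
    | zero => simp
    | succ j =>
      simp only [List.getElem_cons_succ, List.eraseIdx_cons_succ]
      exact ((ih j (by simpa using h)).cons x).trans (List.Perm.swap _ _ _)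

private lemma perm_le_eq {α : Type*} [PartialOrder α] [DecidableEq α] :
    ∀ (n : ℕ) (v w : List α), v.length = n → v.Perm w →
      List.Forall₂ (· ≤ ·) v w → v = w := by
  intro n
  induction n with
  | zero =>
    intro v w hv hp _
    rw [List.length_eq_zero_iff] at hv; subst hv
    exact (List.Perm.nil_eq hp).symm ▸ rfl
  | succ n ih =>
    intro v w hv hp hle
    have hlen : w.length = n + 1 := hp.length_eq ▸ hv
    have hwne : w.toFinset.Nonempty := by
      rw [List.toFinset_nonempty_iff]
      exact List.length_pos_iff.mp (by omega)
    obtain ⟨m, hm, hmax⟩ : ∃ m ∈ w.toFinset, ∀ x ∈ w.toFinset, ¬ m < x := by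
      obtain ⟨m, hm⟩ := w.toFinset.exists_maximal hwne
      exact ⟨m, hm.1, fun x hx hlt => lt_irrefl m (lt_of_lt_of_le hlt (hm.2 hx hlt.le))⟩
    rw [List.mem_toFinset] at hm
    have hmv : m ∈ v := hp.symm.subset hm
    obtain ⟨i, hi, hvi⟩ := List.mem_iff_getElem.mp hmv
    have hiw : i < w.length := by omega
    have hle' := List.forall₂_iff_get.mp hle
    have h1 : v[i] ≤ w[i] := hle'.2 i hi hiw
    have h2 : w[i] = m := by
      by_contra hne
      exact hmax w[i] (List.mem_toFinset.mpr (List.getElem_mem hiw))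
        (lt_of_le_of_ne (hvi ▸ h1) (Ne.symm hne))
    have heq : v[i] = w[i] := by rw [hvi, h2]
    -- erase index i from both
    have hperm' : (v.eraseIdx i).Perm (w.eraseIdx i) := by
      have p1 := perm_cons_eraseIdx v i hi
      have p2 := perm_cons_eraseIdx w i hiw
      have : (v[i] :: v.eraseIdx i).Perm (w[i] :: w.eraseIdx i) :=
        (p1.symm.trans hp).trans p2
      rw [heq] at this
      exact this.cons_inv
    have hlen' : (v.eraseIdx i).length = n := by
      rw [List.length_eraseIdx]; simp [hi]; omega
    have heq' := ih _ _ hlen' hperm' (forall₂_eraseIdx hle i)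
    apply List.ext_getElem (by omega)
    intro k hk hk'
    have hlw : (w.eraseIdx i).length = n := by
      rw [List.length_eraseIdx]; simp [hiw]; omega
    rcases lt_trichotomy k i with hki | hki | hki
    · have hkv : k < (v.eraseIdx i).length := by omega
      have hkw : k < (w.eraseIdx i).length := by omega
      have e1 : (v.eraseIdx i)[k] = v[k] := by
        rw [List.getElem_eraseIdx]; simp [hki]
      have e2 : (w.eraseIdx i)[k] = w[k] := by
        rw [List.getElem_eraseIdx]; simp [hki]
      simp only [heq'] at e1
      rw [← e1]; exact e2
    · subst hki; exact heq
    · have hkv : k - 1 < (v.eraseIdx i).length := by omega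
      have hkw : k - 1 < (w.eraseIdx i).length := by omega
      have e1 : (v.eraseIdx i)[k-1] = v[k] := by
        rw [List.getElem_eraseIdx]; simp only [dif_neg (by omega : ¬ k - 1 < i)]
        congr 1; omega
      have e2 : (w.eraseIdx i)[k-1] = w[k] := by
        rw [List.getElem_eraseIdx]; simp only [dif_neg (by omega : ¬ k - 1 < i)]
        congr 1; omega
      simp only [heq'] at e1
      rw [← e1]; exact e2

private lemma count_add_filter_length {α : Type*} [DecidableEq α] (a : α) (l : List α) :
    l.length = l.count a + (l.filter (· ≠ a)).length := by
  induction l with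
  | nil => simp
  | cons b t ih =>
    by_cases hb : b = a
    · subst hb; simp [List.count_cons, ih]; omega
    · simp [List.count_cons, hb, ih]
      omega

private lemma perm_of_filter_eq {α : Type*} [DecidableEq α] (a : α) {v w : List α}
    (hf : v.filter (· ≠ a) = w.filter (· ≠ a)) (hl : v.length = w.length) :
    v.Perm w := by
  rw [List.perm_iff_count]
  intro b
  by_cases hb : b = a
  · subst hb
    have h1 := count_add_filter_length b v
    have h2 := count_add_filter_length b w
    rw [hf] at h1
    omega
  · have e1 : v.count b = (v.filter (· ≠ a)).count b :=
      (List.count_filter (by simpa using hb)).symm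
    have e2 : w.count b = (w.filter (· ≠ a)).count b :=
      (List.count_filter (by simpa using hb)).symm
    rw [e1, e2, hf]

/-- Two equal-length `a`-extensions of the same word are equal or incomparable
in the componentwise order (Corollary to Lemma 2.3). -/
theorem stmt_5 {α : Type*} [PartialOrder α] [DecidableEq α] (a : α)
    (w w' w'' : List α)
    (h' : IsAExt a w w') (h'' : IsAExt a w w'')
    (hlen : w'.length = w''.length) :
    w' = w'' ∨ (¬ List.Forall₂ (· ≤ ·) w' w'' ∧ ¬ List.Forall₂ (· ≤ ·) w'' w') := by
  have hperm : w'.Perm w'' := by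
    apply perm_of_filter_eq a _ hlen
    unfold IsAExt aErase at h' h''
    rw [h', h'']
  by_cases h1 : List.Forall₂ (· ≤ ·) w' w''
  · exact Or.inl (perm_le_eq _ w' w'' rfl hperm h1)
  by_cases h2 : List.Forall₂ (· ≤ ·) w'' w'
  · exact Or.inl (perm_le_eq _ w'' w' rfl hperm.symm h2).symm
  exact Or.inr ⟨h1, h2⟩
end

section
/- Let f : A → B be a monotone map of partial orders and e ∈ A. Then the letter-wise map f* : (A\{e})* → (B\{f(e)})* (assuming f restricts to A\{e} → B\{f(e)}) is monotone with respect to the induced orders ≤_e and ≤_{f(e)}: if v ≤_e w then f*(v) ≤_{f(e)} f*(w). -/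
/-- Naturality (Proposition 3.3): a monotone map of posets sending only `e` to `f e`
induces a letter-wise monotone map of the induced orders. -/
theorem stmt_10 {α β : Type*} [PartialOrder α] [PartialOrder β]
    [DecidableEq α] [DecidableEq β]
    (f : α → β) (hf : Monotone f) (e : α)
    (hinj : ∀ x : α, x ≠ e → f x ≠ f e)
    (v w : List α) (hv : e ∉ v) (hw : e ∉ w)
    (h : LeExt (· ≤ ·) e v w) :
    LeExt (· ≤ ·) (f e) (v.map f) (w.map f) := by
  obtain ⟨v', w', hv', hw', hr⟩ := h
  have key : ∀ u : List α, aErase (f e) (u.map f) = (aErase e u).map f := by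
    intro u
    simp only [aErase, List.filter_map]
    congr 1
    apply List.filter_congr
    intro x _
    by_cases hx : x = e
    · subst hx; simp
    · simp [hx, hinj x hx]
  simp only [IsAExt] at hv' hw'
  refine ⟨v'.map f, w'.map f, ?_, ?_, ?_⟩
  · simp [IsAExt, key, hv']
  · simp [IsAExt, key, hw']
  · clear hv' hw' hv hw
    induction hr with
    | nil => exact List.Forall₂.nil
    | cons hab _ ih => exact List.Forall₂.cons (hf hab) ih
end

section
/- Let A be a set (trivially ordered) and A' = A ∪ {e} the raising augmentation, i.e., e < a for all a ∈ A. Then the induced order ≤_e on A* coincides with the subsequence (morphological) order: v ≤_e w if and only if v is a sublist (subsequence) of w. -/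
private lemma erase_sublist_of_forall₂ {α : Type*} [DecidableEq α] {v' w' : List (Option α)}
    (h : List.Forall₂ (fun x y : Option α => x = none ∨ x = y) v' w') :
    (aErase none v').Sublist (aErase none w') := by
  induction h with
  | nil => simp [aErase]
  | @cons x y l₁ l₂ hr _ ih =>
    rcases hr with h1 | h2
    · subst h1
      have hl : aErase none (none :: l₁) = aErase none l₁ := by simp [aErase]
      rw [hl]
      show (aErase none l₁).Sublist (List.filter _ (y :: l₂))
      rw [List.filter_cons]
      split
      · exact ih.cons y
      · exact ih
    · subst h2
      show (List.filter _ (x :: l₁)).Sublist (List.filter _ (x :: l₂))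
      rw [List.filter_cons, List.filter_cons]
      split
      · exact ih.cons₂ x
      · exact ih

/-- Raising augmentation of a discrete alphabet: the induced order is the sublist
(morphological) order. The augmented alphabet is `Option α` with auxiliary letter
`none` below everything, and the discrete order on `A`. -/
theorem stmt_13 {α : Type*} [DecidableEq α] (v w : List α) :
    LeExt (fun x y : Option α => x = none ∨ x = y) none (v.map some) (w.map some)
      ↔ v.Sublist w := by
  constructor
  · rintro ⟨v', w', hv, hw, h⟩
    have := erase_sublist_of_forall₂ h
    rw [hv, hw] at this
    obtain ⟨l, hl, hsub⟩ := List.sublist_map_iff.mp this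
    rwa [List.map_injective_iff.mpr (Option.some_injective α) hsub]
  · intro h
    induction h with
    | slnil => exact ⟨[], [], rfl, rfl, List.Forall₂.nil⟩
    | cons a _ ih =>
      obtain ⟨v', w', hv, hw, h⟩ := ih
      refine ⟨none :: v', some a :: w', ?_, ?_, List.Forall₂.cons (Or.inl rfl) h⟩
      · simpa [IsAExt, aErase] using hv
      · simpa [IsAExt, aErase] using hw
    | cons_cons a _ ih =>
      obtain ⟨v', w', hv, hw, h⟩ := ih
      refine ⟨some a :: v', some a :: w', ?_, ?_, List.Forall₂.cons (Or.inr rfl) h⟩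
      · simpa [IsAExt, aErase] using hv
      · simpa [IsAExt, aErase] using hw
end

section
/- Let A = {π, φ} with π < φ and augment to A' = {π, η, φ} with π < η < φ. Then the induced order ≤_η on {π, φ}* coincides with the chronological order: v ≤_η w if and only if w may be obtained from v by deleting some occurrences of π and inserting some occurrences of φ. -/
/-- One-step chronological moves on words over `{π, φ}` (modelled as
`0, 2 : Fin 3`, with the auxiliary letter `η = 1`): delete a `π` or insert a `φ`. -/
inductive ChronStep : List (Fin 3) → List (Fin 3) → Prop
  | delPi (l r : List (Fin 3)) : ChronStep (l ++ [0] ++ r) (l ++ r)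
  | insPhi (l r : List (Fin 3)) : ChronStep (l ++ r) (l ++ [2] ++ r)

/-- Lift a chronological step under a cons. -/
lemma chronStep_cons (x : Fin 3) {s t : List (Fin 3)} (h : ChronStep s t) :
    ChronStep (x :: s) (x :: t) := by
  cases h with
  | delPi l r => exact ChronStep.delPi (x :: l) r
  | insPhi l r => exact ChronStep.insPhi (x :: l) r

lemma rtg_cons (x : Fin 3) {s t : List (Fin 3)}
    (h : Relation.ReflTransGen ChronStep s t) :
    Relation.ReflTransGen ChronStep (x :: s) (x :: t) :=
  h.lift (x :: ·) (fun _ _ hab => chronStep_cons x hab)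

lemma del_head (t : List (Fin 3)) : ChronStep (0 :: t) t := ChronStep.delPi [] t

lemma ins_head (t : List (Fin 3)) : ChronStep t (2 :: t) := ChronStep.insPhi [] t

/-- Splitting a list along a decomposition of its filtering. -/
lemma filter_split {α : Type*} (p : α → Bool) :
    ∀ (s a b : List α), s.filter p = a ++ b →
      ∃ s₁ s₂, s = s₁ ++ s₂ ∧ s₁.filter p = a ∧ s₂.filter p = b := by
  intro s
  induction s with
  | nil =>
    intro a b h
    simp only [List.filter_nil] at h
    obtain ⟨rfl, rfl⟩ := (List.append_eq_nil_iff).mp h.symm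
    exact ⟨[], [], rfl, rfl, rfl⟩
  | cons x s ih =>
    intro a b h
    by_cases hx : p x
    · rw [List.filter_cons_of_pos hx] at h
      cases a with
      | nil =>
        exact ⟨[], x :: s, rfl, rfl, by simpa [List.filter_cons_of_pos hx] using h⟩
      | cons y a' =>
        simp only [List.cons_append, List.cons.injEq] at h
        obtain ⟨rfl, h2⟩ := h
        obtain ⟨s₁, s₂, rfl, h1, h2⟩ := ih a' b h2
        exact ⟨x :: s₁, s₂, rfl, by simp [List.filter_cons_of_pos hx, h1], h2⟩
    · rw [List.filter_cons_of_neg hx] at h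
      obtain ⟨s₁, s₂, rfl, h1, h2⟩ := ih a b h
      exact ⟨x :: s₁, s₂, rfl, by simp [List.filter_cons_of_neg hx, h1], h2⟩

/-- Splitting a list whose filtering starts with a given letter. -/
lemma filter_cons_split {α : Type*} (p : α → Bool) :
    ∀ (s : List α) (x : α) (b : List α), s.filter p = x :: b →
      ∃ s₁ s₂, s = s₁ ++ x :: s₂ ∧ s₁.filter p = [] ∧ s₂.filter p = b := by
  intro s
  induction s with
  | nil => intro x b h; simp at h
  | cons y s ih =>
    intro x b h
    by_cases hy : p y
    · rw [List.filter_cons_of_pos hy] at h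
      obtain ⟨rfl, rfl⟩ := List.cons.inj h
      exact ⟨[], s, rfl, rfl, rfl⟩
    · rw [List.filter_cons_of_neg hy] at h
      obtain ⟨s₁, s₂, rfl, h1, h2⟩ := ih x b h
      exact ⟨y :: s₁, s₂, rfl, by simp [List.filter_cons_of_neg hy, h1], h2⟩

/-- Right decomposition of `Forall₂` along an append. -/
lemma forall₂_split {α β : Type*} {R : α → β → Prop} {l : List α} {l₁ l₂ : List β}
    (h : List.Forall₂ R l (l₁ ++ l₂)) :
    ∃ a b, l = a ++ b ∧ List.Forall₂ R a l₁ ∧ List.Forall₂ R b l₂ :=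
  ⟨l.take l₁.length, l.drop l₁.length, (List.take_append_drop _ l).symm,
    List.forall₂_take_append l l₁ l₂ h, List.forall₂_drop_append l l₁ l₂ h⟩

/-- The forward direction: componentwise comparable extensions give chronological moves. -/
lemma forall₂_rtg : ∀ {v' w' : List (Fin 3)}, List.Forall₂ (· ≤ ·) v' w' →
    Relation.ReflTransGen ChronStep (aErase 1 v') (aErase 1 w') := by
  intro v' w' h
  induction h with
  | nil => exact Relation.ReflTransGen.refl
  | @cons a b l₁ l₂ hab _ ih =>
    fin_cases a <;> fin_cases b <;>
      first
        | exact absurd hab (by decide)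
        | exact rtg_cons _ ih
        | exact show Relation.ReflTransGen ChronStep (0 :: aErase 1 l₁) (aErase 1 l₂) from
            Relation.ReflTransGen.head (del_head _) ih
        | exact show Relation.ReflTransGen ChronStep (0 :: aErase 1 l₁) (2 :: aErase 1 l₂) from
            Relation.ReflTransGen.head (del_head _)
              (Relation.ReflTransGen.tail ih (ins_head _))
        | exact show Relation.ReflTransGen ChronStep (aErase 1 l₁) (aErase 1 l₂) from ih
        | exact show Relation.ReflTransGen ChronStep (aErase 1 l₁) (2 :: aErase 1 l₂) from
            Relation.ReflTransGen.tail ih (ins_head _)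

/-- For `π < η < φ` (the chain `0 < 1 < 2` in `Fin 3`), the order induced by dropping
`η` coincides with the chronological order: the reflexive-transitive closure of
deleting `π`'s and inserting `φ`'s. -/
theorem stmt_14 (v w : List (Fin 3)) (hv : (1 : Fin 3) ∉ v) (hw : (1 : Fin 3) ∉ w) :
    LeExt (· ≤ ·) (1 : Fin 3) v w ↔ Relation.ReflTransGen ChronStep v w := by
  constructor
  · rintro ⟨v', w', hv', hw', hf⟩
    rw [IsAExt] at hv' hw'
    rw [← hv', ← hw']
    exact forall₂_rtg hf
  · intro h
    clear hw
    induction h with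
    | refl =>
      refine ⟨v, v, ?_, ?_, List.forall₂_same.mpr fun x _ => le_refl x⟩ <;>
        · simp only [IsAExt, aErase]
          exact List.filter_eq_self.mpr fun x hx => by
            simpa using fun h : x = 1 => hv (h ▸ hx)
    | @tail b c _ step ih =>
      obtain ⟨v', w'', hv', hw'', hf⟩ := ih
      rw [IsAExt, aErase] at hv' hw''
      cases step with
      | delPi l r =>
        rw [List.append_assoc] at hw''
        obtain ⟨P₁, Q₀, rfl, hP₁, hQ₀⟩ := filter_split _ w'' l _ hw''
        obtain ⟨M, Q, rfl, hM, hQ⟩ := filter_cons_split _ Q₀ 0 r hQ₀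
        rw [← List.append_assoc] at hf
        obtain ⟨A, B₀, rfl, hA, hB₀⟩ := forall₂_split hf
        rw [List.forall₂_cons_right_iff] at hB₀
        obtain ⟨x, B, hx0, hB, rfl⟩ := hB₀
        refine ⟨A ++ x :: B, (P₁ ++ M) ++ 1 :: Q, ?_, ?_, ?_⟩
        · exact hv'
        · show List.filter _ _ = _
          simp only [List.filter_append, List.filter_cons, hP₁, hM, hQ,
            show decide ((1 : Fin 3) ≠ 1) = false from rfl, cond_false, Bool.false_eq_true,
            if_false, List.append_nil]
        · exact List.rel_append hA (List.Forall₂.cons (le_trans hx0 (by decide)) hB)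
      | insPhi l r =>
        obtain ⟨P, Q, rfl, hP, hQ⟩ := filter_split _ w'' l r hw''
        obtain ⟨A, B, rfl, hA, hB⟩ := forall₂_split hf
        refine ⟨A ++ 1 :: B, P ++ 2 :: Q, ?_, ?_, ?_⟩
        · show List.filter _ _ = _
          rw [List.filter_append] at hv'
          simp only [List.filter_append, List.filter_cons,
            show decide ((1 : Fin 3) ≠ 1) = false from rfl, Bool.false_eq_true, if_false]
          exact hv'
        · show List.filter _ _ = _
          simp only [List.filter_append, List.filter_cons, hP, hQ,
            show decide ((2 : Fin 3) ≠ 1) = true from rfl, if_true]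
          simp
        · exact List.rel_append hA (List.Forall₂.cons (by decide) hB)
end

section
/- Let A = {π, φ} (as a set) and augment by η with η < π and η < φ (π and φ incomparable). Then the induced order ≤_η on {π, φ}* is the sublist (subsequence) order: v ≤_η w iff v is a subsequence of w. -/
private lemma filter_sublist_of_forall₂ :
    ∀ {l₁ l₂ : List (Fin 3)}, List.Forall₂ (fun x y : Fin 3 => x = 1 ∨ x = y) l₁ l₂ →
      (l₁.filter (· ≠ (1 : Fin 3))).Sublist (l₂.filter (· ≠ (1 : Fin 3))) := by
  intro l₁ l₂ h
  induction h with
  | nil => simp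
  | cons hxy h ih =>
    rename_i x y tl₁ tl₂
    rcases hxy with h1 | heq
    · subst h1
      by_cases hy : y = 1
      · subst hy; simpa [List.filter_cons] using ih
      · simp only [List.filter_cons]
        rw [if_neg (by simp), if_pos (by simp [hy])]
        exact ih.cons y
    · subst heq
      by_cases hx : x = 1
      · subst hx; simpa using ih
      · simpa [List.filter_cons, hx] using ih.cons₂ x

private lemma sublist_to_ext :
    ∀ {v w : List (Fin 3)}, v.Sublist w → (∀ x ∈ w, x ≠ (1 : Fin 3)) →
      ∃ v' w', IsAExt 1 v v' ∧ IsAExt 1 w w' ∧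
        List.Forall₂ (fun x y : Fin 3 => x = 1 ∨ x = y) v' w' := by
  intro v w h
  induction h with
  | slnil => exact fun _ => ⟨[], [], rfl, rfl, List.Forall₂.nil⟩
  | cons y h ih =>
    intro hmem
    obtain ⟨v', w', hv', hw', hf⟩ := ih (fun x hx => hmem x (List.mem_cons_of_mem _ hx))
    refine ⟨1 :: v', y :: w', ?_, ?_, List.Forall₂.cons (Or.inl rfl) hf⟩
    · simpa [IsAExt, aErase, List.filter_cons] using hv'
    · have hy : y ≠ 1 := hmem y List.mem_cons_self
      simpa [IsAExt, aErase, List.filter_cons, hy] using hw'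
  | cons_cons x h ih =>
    intro hmem
    obtain ⟨v', w', hv', hw', hf⟩ := ih (fun z hz => hmem z (List.mem_cons_of_mem _ hz))
    have hx : x ≠ 1 := hmem x List.mem_cons_self
    refine ⟨x :: v', x :: w', ?_, ?_, List.Forall₂.cons (Or.inr rfl) hf⟩
    · simpa [IsAExt, aErase, List.filter_cons, hx] using hv'
    · simpa [IsAExt, aErase, List.filter_cons, hx] using hw'

/-- Example 3: alphabet `{π, φ}` (as `0, 2 : Fin 3`) with auxiliary letter `η = 1`
related by `η < π`, `η < φ` only (and `π, φ` incomparable). The induced order is the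
sublist (morphological) order. -/
theorem stmt_15 (v w : List (Fin 3)) (hv : (1 : Fin 3) ∉ v) (hw : (1 : Fin 3) ∉ w) :
    LeExt (fun x y : Fin 3 => x = 1 ∨ x = y) (1 : Fin 3) v w ↔ v.Sublist w := by
  constructor
  · rintro ⟨v', w', hv', hw', hf⟩
    have := filter_sublist_of_forall₂ hf
    rwa [show (v'.filter (· ≠ (1 : Fin 3))) = v from hv',
      show (w'.filter (· ≠ (1 : Fin 3))) = w from hw'] at this
  · intro h
    exact sublist_to_ext h (fun x hx hx1 => hw (hx1 ▸ hx))
end
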